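/- With A, B ∈ SO(4) as above (cos θ transcendental), the group K generated by A and B is a free group of rank 2: no nonempty reduced word in A±1, B±1 equals the identity matrix. -/

import Mathlib

open Matrix Real

/-- The rotation `A = diag(R(θ), R(θ))`. -/
noncomputable def matA (θ : ℝ) : Matrix (Fin 4) (Fin 4) ℝ :=
  !![cos θ, -sin θ, 0, 0;
     sin θ,  cos θ, 0, 0;
     0, 0, cos θ, -sin θ;
     0, 0, sin θ,  cos θ]

/-- The rotation `B` by θ in the (1,4)- and (2,3)-planes. -/
noncomputable def matB (θ : ℝ) : Matrix (Fin 4) (Fin 4) ℝ :=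
  !![cos θ, 0, 0, -sin θ;
     0, cos θ, -sin θ, 0;
     0, sin θ,  cos θ, 0;
     sin θ, 0, 0,  cos θ]

section SW7AUX
open Polynomial


inductive Ltr | ap | am | bp | bm
deriving DecidableEq

open Ltr

def Ltr.inv : Ltr → Ltr
| ap => am | am => ap | bp => bm | bm => bp

noncomputable def stp : Ltr → ℚ[X] × ℚ[X] → ℚ[X] × ℚ[X]
| ap, (f, g) => (X^2 * f, g)
| am, (f, g) => (f, X^2 * g)
| bp, (f, g) => (C (1/2) * ((X^2+1) * f - (X^2-1) * g), C (1/2) * (-(X^2-1) * f + (X^2+1) * g))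
| bm, (f, g) => (C (1/2) * ((X^2+1) * f + (X^2-1) * g), C (1/2) * ((X^2-1) * f + (X^2+1) * g))

noncomputable def pvec : List Ltr → ℚ[X] × ℚ[X] :=
  List.foldr stp (1, C 2)

def St : Ltr → ℕ → ℚ[X] × ℚ[X] → Prop
| ap, d, p => p.1.coeff d ≠ 0 ∧ p.1.degree ≤ d ∧ p.2.degree < d
| am, d, p => p.2.coeff d ≠ 0 ∧ p.2.degree ≤ d ∧ p.1.degree < d
| bp, d, p => p.1.coeff d ≠ 0 ∧ p.2.coeff d = -p.1.coeff d ∧ p.1.degree ≤ d ∧ p.2.degree ≤ d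
| bm, d, p => p.1.coeff d ≠ 0 ∧ p.2.coeff d = p.1.coeff d ∧ p.1.degree ≤ d ∧ p.2.degree ≤ d

lemma cXX (f : ℚ[X]) (d : ℕ) : (X^2 * f).coeff (d+2) = f.coeff d :=
  coeff_X_pow_mul f 2 d

lemma hi_coeff (f : ℚ[X]) (d : ℕ) (hf : f.degree ≤ d) : f.coeff (d+2) = 0 := by
  apply coeff_eq_zero_of_degree_lt
  refine lt_of_le_of_lt hf ?_
  exact_mod_cast (by omega : d < d + 2)

lemma cP (f : ℚ[X]) (d : ℕ) (hf : f.degree ≤ d) : ((X^2+1) * f).coeff (d+2) = f.coeff d := by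
  rw [add_mul, one_mul, coeff_add, cXX, hi_coeff f d hf, add_zero]

lemma cM (f : ℚ[X]) (d : ℕ) (hf : f.degree ≤ d) : ((X^2-1) * f).coeff (d+2) = f.coeff d := by
  rw [sub_mul, one_mul, coeff_sub, cXX, hi_coeff f d hf, sub_zero]

lemma dXX (f : ℚ[X]) (d : ℕ) (hf : f.degree ≤ d) : (X^2 * f).degree ≤ ((d+2 : ℕ) : WithBot ℕ) := by
  refine le_trans (degree_mul_le _ _) ?_
  rw [degree_X_pow]
  refine le_trans (add_le_add le_rfl hf) ?_
  exact_mod_cast le_of_eq (by omega : 2 + d = d + 2)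

lemma dP (f : ℚ[X]) (d : ℕ) (hf : f.degree ≤ d) : ((X^2+1) * f).degree ≤ ((d+2 : ℕ) : WithBot ℕ) := by
  refine le_trans (degree_mul_le _ _) ?_
  rw [(by norm_num : (X^2+1 : ℚ[X]) = X^2 + C 1), degree_X_pow_add_C (by norm_num)]
  refine le_trans (add_le_add le_rfl hf) ?_
  exact_mod_cast le_of_eq (by omega : 2 + d = d + 2)

lemma dM (f : ℚ[X]) (d : ℕ) (hf : f.degree ≤ d) : ((X^2-1) * f).degree ≤ ((d+2 : ℕ) : WithBot ℕ) := by
  refine le_trans (degree_mul_le _ _) ?_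
  rw [(by simp [sub_eq_add_neg] : (X^2-1 : ℚ[X]) = X^2 + C (-1)), degree_X_pow_add_C (by norm_num)]
  refine le_trans (add_le_add le_rfl hf) ?_
  exact_mod_cast le_of_eq (by omega : 2 + d = d + 2)

lemma dC (f : ℚ[X]) (d : ℕ) (hf : f.degree ≤ d) (a : ℚ) : (C a * f).degree ≤ ((d : ℕ) : WithBot ℕ) := by
  refine le_trans (degree_mul_le _ _) ?_
  refine le_trans (add_le_add degree_C_le hf) ?_
  simp

lemma step_st (L : Ltr) (d : ℕ) (f g : ℚ[X]) (hf : f.degree ≤ d) (hg : g.degree ≤ d)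
    (h : match L with
      | ap => f.coeff d ≠ 0
      | am => g.coeff d ≠ 0
      | bp => f.coeff d - g.coeff d ≠ 0
      | bm => f.coeff d + g.coeff d ≠ 0) :
    St L (d+2) (stp L (f, g)) := by
  have hdd : ((d : ℕ) : WithBot ℕ) < ((d+2 : ℕ) : WithBot ℕ) := by exact_mod_cast (by omega : d < d+2)
  cases L with
  | ap =>
    exact ⟨by simpa only [stp, cXX] using h, dXX f d hf, lt_of_le_of_lt hg hdd⟩
  | am =>
    exact ⟨by simpa only [stp, cXX] using h, dXX g d hg, lt_of_le_of_lt hf hdd⟩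
  | bp =>
    constructor
    · simp only [stp, coeff_C_mul, coeff_sub, cP f d hf, cM g d hg]
      simpa using h
    refine ⟨?_, dC _ _ (le_trans (degree_sub_le _ _) (max_le (dP f d hf) (dM g d hg))) _,
      dC _ _ (le_trans (degree_add_le _ _) (max_le (by rw [neg_mul]; simpa using dM f d hf) (dP g d hg))) _⟩
    simp only [stp, coeff_C_mul, coeff_sub, coeff_add, coeff_neg, neg_mul, cP f d hf, cM g d hg,
      cP g d hg, cM f d hf]
    ring
  | bm =>
    constructor
    · simp only [stp, coeff_C_mul, coeff_add, cP f d hf, cM g d hg]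
      simpa using h
    refine ⟨?_, dC _ _ (le_trans (degree_add_le _ _) (max_le (dP f d hf) (dM g d hg))) _,
      dC _ _ (le_trans (degree_add_le _ _) (max_le (dM f d hf) (dP g d hg))) _⟩
    simp only [stp, coeff_C_mul, coeff_add, cP f d hf, cM g d hg, cP g d hg, cM f d hf]

lemma st_extract {L : Ltr} {d : ℕ} {p : ℚ[X] × ℚ[X]} (h : St L d p) :
    p.1.degree ≤ d ∧ p.2.degree ≤ d := by
  cases L with
  | ap => exact ⟨h.2.1, le_of_lt h.2.2⟩
  | am => exact ⟨le_of_lt h.2.2, h.2.1⟩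
  | bp => exact ⟨h.2.2.1, h.2.2.2⟩
  | bm => exact ⟨h.2.2.1, h.2.2.2⟩

lemma st_pvec : ∀ (rest : List Ltr) (L : Ltr),
    (L :: rest).Chain' (fun a b => b ≠ a.inv) →
    St L (2 * (rest.length + 1)) (pvec (L :: rest)) := by
  intro rest
  induction rest with
  | nil =>
    intro L _
    have : pvec [L] = stp L (1, C 2) := rfl
    rw [this]
    show St L (2*1) _
    have h01 : (1 : ℚ[X]).degree ≤ (0:ℕ) := degree_one_le
    have h02 : (C 2 : ℚ[X]).degree ≤ (0:ℕ) := degree_C_le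
    have := step_st L 0 1 (C 2) h01 h02 ?_
    · simpa using this
    · cases L <;> simp <;> norm_num
  | cons L' rest ih =>
    intro L hch
    unfold List.Chain' at hch; rw [List.isChain_cons_cons] at hch
    have hL' : L' ≠ L.inv := hch.1
    have ihst := ih L' hch.2
    obtain ⟨hf, hg⟩ := st_extract ihst
    set d := 2 * (rest.length + 1) with hd
    have hlen : 2 * ((L' :: rest).length + 1) = d + 2 := by simp [hd, List.length_cons]; ring
    rw [hlen]
    have : pvec (L :: L' :: rest) = stp L (pvec (L' :: rest)) := rfl
    rw [this]
    have hmain := step_st L d (pvec (L' :: rest)).1 (pvec (L' :: rest)).2 hf hg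
    set f := (pvec (L' :: rest)).1 with hfd
    set g := (pvec (L' :: rest)).2 with hgd
    have hsplit : pvec (L' :: rest) = (f, g) := rfl
    rw [hsplit]
    apply hmain
    -- now the nonzero condition, cases on L and L'
    cases L with
    | ap =>
      show f.coeff d ≠ 0
      cases L' with
      | ap => exact ihst.1
      | am => exact absurd rfl hL'
      | bp => exact ihst.1
      | bm => exact ihst.1
    | am =>
      show g.coeff d ≠ 0
      cases L' with
      | ap => exact absurd rfl hL'
      | am => exact ihst.1
      | bp => have h21 : g.coeff d = -f.coeff d := ihst.2.1
              rw [h21]; exact neg_ne_zero.mpr ihst.1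
      | bm => have h21 : g.coeff d = f.coeff d := ihst.2.1
              rw [h21]; exact ihst.1
    | bp =>
      show f.coeff d - g.coeff d ≠ 0
      cases L' with
      | ap =>
        have : g.coeff d = 0 := coeff_eq_zero_of_degree_lt ihst.2.2
        rw [this, sub_zero]; exact ihst.1
      | am =>
        have : f.coeff d = 0 := coeff_eq_zero_of_degree_lt ihst.2.2
        rw [this, zero_sub]; exact neg_ne_zero.mpr ihst.1
      | bp =>
        have h21 : g.coeff d = -f.coeff d := ihst.2.1
        rw [h21]
        intro hc; exact ihst.1 (by linarith)
      | bm => exact absurd rfl hL'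
    | bm =>
      show f.coeff d + g.coeff d ≠ 0
      cases L' with
      | ap =>
        have : g.coeff d = 0 := coeff_eq_zero_of_degree_lt ihst.2.2
        rw [this, add_zero]; exact ihst.1
      | am =>
        have : f.coeff d = 0 := coeff_eq_zero_of_degree_lt ihst.2.2
        rw [this, zero_add]; exact ihst.1
      | bp => exact absurd rfl hL'
      | bm =>
        have h21 : g.coeff d = f.coeff d := ihst.2.1
        rw [h21]
        intro hc; exact ihst.1 (by linarith)

lemma pvec_ne (LL : List Ltr) (hne : LL ≠ [])
    (hch : LL.Chain' (fun a b => b ≠ a.inv)) :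
    ¬ (pvec LL = (X ^ LL.length, C 2 * X ^ LL.length)) := by
  obtain ⟨L, rest, rfl⟩ := List.exists_cons_of_ne_nil hne
  intro hEq
  have hst := st_pvec rest L hch
  rw [hEq] at hst
  set n := (L :: rest).length with hn
  have hnpos : 1 ≤ n := by simp [hn]
  have hx : (X ^ n : ℚ[X]).coeff (2 * (rest.length + 1)) = 0 := by
    rw [coeff_X_pow]
    have : n ≠ 2 * (rest.length + 1) := by
      simp only [hn, List.length_cons]; omega
    simp [if_neg (Ne.symm this)]
  have hcx : (C 2 * X ^ n : ℚ[X]).coeff (2 * (rest.length + 1)) = 0 := by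
    rw [coeff_C_mul, hx, mul_zero]
  cases L with
  | ap => exact hst.1 hx
  | am => exact hst.1 hcx
  | bp => exact hst.1 hx
  | bm => exact hst.1 hx

lemma hAinv (θ : ℝ) : matA θ * matA (-θ) = 1 := by
  ext i j
  fin_cases i <;> fin_cases j <;>
    simp [matA, Matrix.mul_apply, Fin.sum_univ_four, Matrix.one_apply, Real.cos_neg,
      Real.sin_neg, Matrix.cons_val_two, Matrix.cons_val_three, Matrix.vecHead, Matrix.vecTail] <;>
    first
      | linear_combination sin_sq_add_cos_sq θ
      | linear_combination -(sin_sq_add_cos_sq θ)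
      | ring

lemma hBinv (θ : ℝ) : matB θ * matB (-θ) = 1 := by
  ext i j
  fin_cases i <;> fin_cases j <;>
    simp [matB, Matrix.mul_apply, Fin.sum_univ_four, Matrix.one_apply, Real.cos_neg,
      Real.sin_neg, Matrix.cons_val_two, Matrix.cons_val_three, Matrix.vecHead, Matrix.vecTail] <;>
    first
      | linear_combination sin_sq_add_cos_sq θ
      | linear_combination -(sin_sq_add_cos_sq θ)
      | ring

noncomputable def ph1 (v : Fin 4 → ℝ) : ℂ := (v 0 : ℂ) + (v 1 : ℂ) * Complex.I
noncomputable def ph2 (v : Fin 4 → ℝ) : ℂ := (v 2 : ℂ) - (v 3 : ℂ) * Complex.I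
noncomputable def clam (θ : ℝ) : ℂ := ((cos θ : ℝ) : ℂ) + ((sin θ : ℝ) : ℂ) * Complex.I
noncomputable def cnu (θ : ℝ) : ℂ := ((cos θ : ℝ) : ℂ) - ((sin θ : ℝ) : ℂ) * Complex.I

lemma hcs (θ : ℝ) : ((cos θ : ℝ) : ℂ)^2 + ((sin θ : ℝ) : ℂ)^2 = 1 := by
  exact_mod_cast congrArg (fun x : ℝ => (x : ℂ)) (by linear_combination sin_sq_add_cos_sq θ :
    cos θ^2 + sin θ^2 = (1:ℝ))

lemma lam_mul_nu (θ : ℝ) : clam θ * cnu θ = 1 := by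
  simp only [clam, cnu]
  linear_combination hcs θ - ((sin θ : ℝ) : ℂ)^2 * Complex.I_sq

lemma e1 (θ : ℝ) : clam θ ^ 2 + 1 = 2 * ((cos θ : ℝ) : ℂ) * clam θ := by
  simp only [clam]
  linear_combination (-(hcs θ)) + ((sin θ : ℝ) : ℂ)^2 * Complex.I_sq

lemma e2 (θ : ℝ) : clam θ ^ 2 - 1 = 2 * ((sin θ : ℝ) : ℂ) * Complex.I * clam θ := by
  simp only [clam]
  linear_combination hcs θ - ((sin θ : ℝ) : ℂ)^2 * Complex.I_sq

lemma mv0 (θ : ℝ) (v : Fin 4 → ℝ) : (matA θ *ᵥ v) 0 = cos θ * v 0 - sin θ * v 1 := by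
  simp [matA, Matrix.mulVec, dotProduct, Fin.sum_univ_four]; ring

lemma clam_neg (θ : ℝ) : clam (-θ) = cnu θ := by
  simp [clam, cnu, Real.cos_neg, Real.sin_neg, sub_eq_add_neg]

lemma cnu_neg (θ : ℝ) : cnu (-θ) = clam θ := by
  simp [clam, cnu, Real.cos_neg, Real.sin_neg, sub_eq_add_neg]

lemma fA1 (θ : ℝ) (v : Fin 4 → ℝ) : ph1 (matA θ *ᵥ v) = clam θ * ph1 v := by
  simp [ph1, clam, matA, Matrix.mulVec, dotProduct, Fin.sum_univ_four,
    Matrix.cons_val_two, Matrix.cons_val_three, Matrix.vecHead, Matrix.vecTail]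
  linear_combination (-(Complex.sin θ) * (v 1)) * Complex.I_sq

lemma fA2 (θ : ℝ) (v : Fin 4 → ℝ) : ph2 (matA θ *ᵥ v) = cnu θ * ph2 v := by
  simp [ph2, cnu, matA, Matrix.mulVec, dotProduct, Fin.sum_univ_four,
    Matrix.cons_val_two, Matrix.cons_val_three, Matrix.vecHead, Matrix.vecTail]
  linear_combination (-(Complex.sin θ) * (v 3)) * Complex.I_sq

lemma fB1 (θ : ℝ) (v : Fin 4 → ℝ) :
    ph1 (matB θ *ᵥ v) = ((cos θ : ℝ) : ℂ) * ph1 v - ((sin θ : ℝ) : ℂ) * Complex.I * ph2 v := by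
  simp [ph1, ph2, matB, Matrix.mulVec, dotProduct, Fin.sum_univ_four,
    Matrix.cons_val_two, Matrix.cons_val_three, Matrix.vecHead, Matrix.vecTail]
  linear_combination (-(Complex.sin θ) * (v 3)) * Complex.I_sq

lemma fB2 (θ : ℝ) (v : Fin 4 → ℝ) :
    ph2 (matB θ *ᵥ v) = ((cos θ : ℝ) : ℂ) * ph2 v - ((sin θ : ℝ) : ℂ) * Complex.I * ph1 v := by
  simp [ph1, ph2, matB, Matrix.mulVec, dotProduct, Fin.sum_univ_four,
    Matrix.cons_val_two, Matrix.cons_val_three, Matrix.vecHead, Matrix.vecTail]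
  linear_combination ((Complex.sin θ) * (v 1)) * Complex.I_sq

noncomputable def rmat (θ : ℝ) : Ltr → Matrix (Fin 4) (Fin 4) ℝ
| .ap => matA θ
| .am => matA (-θ)
| .bp => matB θ
| .bm => matB (-θ)

lemma rmat_inv_mul (θ : ℝ) (L : Ltr) : rmat θ L * rmat θ L.inv = 1 := by
  cases L
  · exact hAinv θ
  · have := hAinv (-θ); rwa [neg_neg] at this
  · exact hBinv θ
  · have := hBinv (-θ); rwa [neg_neg] at this

noncomputable def w0 : Fin 4 → ℝ := ![1, 0, 2, 0]

noncomputable def rvec (θ : ℝ) : List Ltr → (Fin 4 → ℝ)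
| [] => w0
| L :: r => rmat θ L *ᵥ rvec θ r

lemma bridge_list (θ : ℝ) (LL : List Ltr) :
    aeval (clam θ) (pvec LL).1 = clam θ ^ LL.length * ph1 (rvec θ LL) ∧
    aeval (clam θ) (pvec LL).2 = clam θ ^ LL.length * ph2 (rvec θ LL) := by
  induction LL with
  | nil =>
    have hp : pvec [] = ((1 : ℚ[X]), (C 2 : ℚ[X])) := rfl
    have hr : rvec θ [] = w0 := rfl
    rw [hp, hr]
    have h1 : ph1 w0 = 1 := by simp [ph1, w0]
    have h2 : ph2 w0 = 2 := by simp [ph2, w0]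
    rw [h1, h2]
    norm_num
  | cons L r ih =>
    obtain ⟨ih1, ih2⟩ := ih
    have hp : pvec (L :: r) = stp L (pvec r) := rfl
    have hr : rvec θ (L :: r) = rmat θ L *ᵥ rvec θ r := rfl
    have hlen : (L :: r).length = r.length + 1 := rfl
    rw [hp, hr, hlen]
    have hsplit : pvec r = ((pvec r).1, (pvec r).2) := rfl
    rw [hsplit]
    have hc2 : (aeval (clam θ)) (C (1/2 : ℚ)) = (1/2 : ℂ) := by
      rw [aeval_C]; norm_num
    cases L with
    | ap =>
      constructor
      · show aeval (clam θ) (X^2 * (pvec r).1) = _ * ph1 (matA θ *ᵥ rvec θ r)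
        rw [_root_.map_mul, _root_.map_pow, aeval_X, ih1, fA1]
        ring
      · show aeval (clam θ) ((pvec r).2) = _ * ph2 (matA θ *ᵥ rvec θ r)
        rw [ih2, fA2]
        linear_combination (-(clam θ ^ r.length * ph2 (rvec θ r))) * lam_mul_nu θ
    | am =>
      constructor
      · show aeval (clam θ) ((pvec r).1) = _ * ph1 (matA (-θ) *ᵥ rvec θ r)
        rw [ih1, fA1, clam_neg]
        linear_combination (-(clam θ ^ r.length * ph1 (rvec θ r))) * lam_mul_nu θ
      · show aeval (clam θ) (X^2 * (pvec r).2) = _ * ph2 (matA (-θ) *ᵥ rvec θ r)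
        rw [_root_.map_mul, _root_.map_pow, aeval_X, ih2, fA2, cnu_neg]
        ring
    | bp =>
      constructor
      · show aeval (clam θ) (C (1/2) * ((X^2+1) * (pvec r).1 - (X^2-1) * (pvec r).2))
            = _ * ph1 (matB θ *ᵥ rvec θ r)
        rw [fB1]
        simp only [_root_.map_mul, _root_.map_add, _root_.map_sub, _root_.map_neg,
          _root_.map_pow, _root_.map_one, aeval_X, hc2, ih1, ih2]
        linear_combination ((1/2 : ℂ) * clam θ ^ r.length * ph1 (rvec θ r)) * e1 θ -
          ((1/2 : ℂ) * clam θ ^ r.length * ph2 (rvec θ r)) * e2 θ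
      · show aeval (clam θ) (C (1/2) * (-(X^2-1) * (pvec r).1 + (X^2+1) * (pvec r).2))
            = _ * ph2 (matB θ *ᵥ rvec θ r)
        rw [fB2]
        simp only [_root_.map_mul, _root_.map_add, _root_.map_sub, _root_.map_neg,
          _root_.map_pow, _root_.map_one, aeval_X, hc2, ih1, ih2]
        linear_combination (-(1/2 : ℂ) * clam θ ^ r.length * ph1 (rvec θ r)) * e2 θ +
          ((1/2 : ℂ) * clam θ ^ r.length * ph2 (rvec θ r)) * e1 θ
    | bm =>
      have hcn : ((cos (-θ) : ℝ) : ℂ) = ((cos θ : ℝ) : ℂ) := by rw [Real.cos_neg]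
      have hsn : ((sin (-θ) : ℝ) : ℂ) = -((sin θ : ℝ) : ℂ) := by
        rw [Real.sin_neg]; push_cast [-Complex.ofReal_sin]; ring
      constructor
      · show aeval (clam θ) (C (1/2) * ((X^2+1) * (pvec r).1 + (X^2-1) * (pvec r).2))
            = _ * ph1 (matB (-θ) *ᵥ rvec θ r)
        rw [fB1, hcn, hsn]
        simp only [_root_.map_mul, _root_.map_add, _root_.map_sub, _root_.map_neg,
          _root_.map_pow, _root_.map_one, aeval_X, hc2, ih1, ih2]
        linear_combination ((1/2 : ℂ) * clam θ ^ r.length * ph1 (rvec θ r)) * e1 θ +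
          ((1/2 : ℂ) * clam θ ^ r.length * ph2 (rvec θ r)) * e2 θ
      · show aeval (clam θ) (C (1/2) * ((X^2-1) * (pvec r).1 + (X^2+1) * (pvec r).2))
            = _ * ph2 (matB (-θ) *ᵥ rvec θ r)
        rw [fB2, hcn, hsn]
        simp only [_root_.map_mul, _root_.map_add, _root_.map_sub, _root_.map_neg,
          _root_.map_pow, _root_.map_one, aeval_X, hc2, ih1, ih2]
        linear_combination ((1/2 : ℂ) * clam θ ^ r.length * ph1 (rvec θ r)) * e2 θ +
          ((1/2 : ℂ) * clam θ ^ r.length * ph2 (rvec θ r)) * e1 θ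

lemma clam_trans (θ : ℝ) (htr : Transcendental ℚ (cos θ)) : Transcendental ℚ (clam θ) := by
  intro halg
  apply htr
  have h1 : IsAlgebraic ℚ (clam θ)⁻¹ := halg.inv
  have hnu : (clam θ)⁻¹ = cnu θ := inv_eq_of_mul_eq_one_right (lam_mul_nu θ)
  rw [hnu] at h1
  have h2 : IsAlgebraic ℚ (clam θ + cnu θ) := (halg.isIntegral.add h1.isIntegral).isAlgebraic
  have he : clam θ + cnu θ = ((2 * cos θ : ℝ) : ℂ) := by
    simp only [clam, cnu]; push_cast [-Complex.ofReal_cos]; ring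
  rw [he] at h2
  have h3 : IsAlgebraic ℚ ((2 * cos θ : ℝ)) := by
    have heq : ((2 * cos θ : ℝ) : ℂ) = algebraMap ℝ ℂ (2 * cos θ) := rfl
    rw [heq] at h2
    exact (isAlgebraic_algebraMap_iff (algebraMap ℝ ℂ).injective).mp h2
  have h4 : IsAlgebraic ℚ ((1/2 : ℝ)) := by
    have := isAlgebraic_algebraMap (A := ℝ) (R := ℚ) (1/2 : ℚ)
    norm_num at this
    exact this
  have h5 : IsAlgebraic ℚ ((1/2 : ℝ) * (2 * cos θ)) :=
    (h4.isIntegral.mul h3.isIntegral).isAlgebraic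
  have heq2 : (1/2 : ℝ) * (2 * cos θ) = cos θ := by ring
  rwa [heq2] at h5

/-- If `cos θ` is transcendental, the group generated by `A` and `B` is free of rank 2:
no nonempty reduced word in `A^{±1}, B^{±1}` equals the identity. -/
theorem stmt_7 (θ : ℝ) (htr : Transcendental ℚ (cos θ))
    (l : List (Matrix (Fin 4) (Fin 4) ℝ)) (hne : l ≠ [])
    (hmem : ∀ x ∈ l, x ∈ ({matA θ, matB θ, (matA θ)⁻¹, (matB θ)⁻¹} :
      Set (Matrix (Fin 4) (Fin 4) ℝ)))
    (hred : l.Chain' (fun x y => x * y ≠ 1)) :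
    l.prod ≠ 1 := by
  classical
  intro hprod
  set toL : Matrix (Fin 4) (Fin 4) ℝ → Ltr := fun x =>
    if x = matA θ then .ap else if x = matB θ then .bp
    else if x = (matA θ)⁻¹ then .am else .bm with htoL
  have hto : ∀ x ∈ l, rmat θ (toL x) = x := by
    intro x hx
    have hx4 := hmem x hx
    simp only [Set.mem_insert_iff, Set.mem_singleton_iff] at hx4
    by_cases h1 : x = matA θ
    · simp only [htoL, if_pos h1]; exact h1.symm
    by_cases h2 : x = matB θ
    · simp only [htoL, if_neg h1, if_pos h2]; exact h2.symm
    by_cases h3 : x = (matA θ)⁻¹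
    · simp only [htoL, if_neg h1, if_neg h2, if_pos h3]
      show matA (-θ) = x
      rw [h3, Matrix.inv_eq_right_inv (hAinv θ)]
    · have h4 : x = (matB θ)⁻¹ := by tauto
      simp only [htoL, if_neg h1, if_neg h2, if_neg h3]
      show matB (-θ) = x
      rw [h4, Matrix.inv_eq_right_inv (hBinv θ)]
  have hl : (l.map toL).map (rmat θ) = l := by
    rw [List.map_map]
    calc l.map (rmat θ ∘ toL) = l.map id := List.map_congr_left (fun x hx => hto x hx)
    _ = l := List.map_id l
  set LL := l.map toL with hLL
  have hlen : LL.length = l.length := List.length_map toL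
  have hch : LL.Chain' (fun a b => b ≠ a.inv) := by
    have hred' := hred
    rw [← hl] at hred'; unfold List.Chain' at hred'; rw [List.isChain_map] at hred'
    refine hred'.imp ?_
    intro a b hab hb
    exact hab (by rw [hb]; exact rmat_inv_mul θ a)
  have hLLne : LL ≠ [] := by
    simp only [hLL, ne_eq, List.map_eq_nil_iff]
    exact hne
  have hrv : ∀ (M : List Ltr), rvec θ M = (M.map (rmat θ)).prod *ᵥ w0 := by
    intro M
    induction M with
    | nil => simp [rvec]
    | cons L r ih =>
      show rmat θ L *ᵥ rvec θ r = _
      rw [ih, List.map_cons, List.prod_cons, Matrix.mulVec_mulVec]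
  have hr0 : rvec θ LL = w0 := by
    rw [hrv, hl, hprod, Matrix.one_mulVec]
  obtain ⟨hb1, hb2⟩ := bridge_list θ LL
  rw [hr0] at hb1 hb2
  have hph1 : ph1 w0 = 1 := by simp [ph1, w0]
  have hph2 : ph2 w0 = 2 := by simp [ph2, w0]
  rw [hph1, mul_one] at hb1
  rw [hph2] at hb2
  have htl := clam_trans θ htr
  have hinj : ∀ p q : ℚ[X], aeval (clam θ) p = aeval (clam θ) q → p = q := by
    intro p q h
    by_contra hne'
    exact htl ⟨p - q, sub_ne_zero.mpr hne', by rw [_root_.map_sub, h, sub_self]⟩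
  have h1 : (pvec LL).1 = X ^ LL.length := by
    apply hinj
    rw [hb1, _root_.map_pow, aeval_X]
  have h2 : (pvec LL).2 = C 2 * X ^ LL.length := by
    apply hinj
    rw [hb2, _root_.map_mul, _root_.map_pow, aeval_X, aeval_C]
    norm_num
    ring
  exact pvec_ne LL hLLne hch (Prod.ext h1 h2)

end SW7AUX
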